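/- arXiv:0909.5429 — 3 statements merged into one kernel-verified Lean document; each statement's English description precedes it below -/
import Mathlib

section
/- Let f, g ∈ ℂ[x_1,…,x_n] be weighted homogeneous polynomials of degree d with respect to weights (w_1,…,w_n) with J_f = J_g, and for t ∈ ℂ set f_t = (1−t)f + tg. Let V_t be the ℂ-linear span of the polynomials x^P · ∂f_t/∂x_i for i = 1,…,n and multi-indices P with ⟨P, w⟩ = w_i. Then the set of t ∈ ℂ for which V_t ≠ J_f ∩ H_w^d is finite; in particular dim_ℂ V_t is constant for all t outside a finite set. -/
open MvPolynomial


open Polynomial in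
lemma generic_span {V : Type*} [AddCommGroup V] [Module ℂ V] {ι : Type*} [Fintype ι]
    [DecidableEq ι] (e : Module.Basis ι ℂ V) (v : ι → V) :
    ∃ T : Set ℂ, T.Finite ∧ ∀ t ∉ T,
      Submodule.span ℂ (Set.range fun s => e s + t • v s) = ⊤ := by
  set M : Matrix ι ι ℂ[X] := Matrix.of fun s j : ι =>
      Polynomial.C (e.repr (e j) s) + Polynomial.X * Polynomial.C (e.repr (v j) s) with hM
  have key : ∀ t : ℂ, M.det.eval t = e.det (fun s => e s + t • v s) := by
    intro t
    have h1 : M.det.eval t = ((evalRingHom t) M.det) := rfl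
    rw [h1, RingHom.map_det]
    rw [Module.Basis.det_apply]
    congr 1
    ext s j
    simp [hM, Module.Basis.toMatrix_apply, mul_comm t]
  have hne : M.det ≠ 0 := by
    intro h0
    have := key 0
    rw [h0] at this
    simp only [Polynomial.eval_zero, zero_smul, add_zero] at this
    rw [Module.Basis.det_self] at this
    exact one_ne_zero this.symm
  refine ⟨{t | M.det.IsRoot t}, Polynomial.finite_setOf_isRoot hne, fun t ht => ?_⟩
  have hdet : e.det (fun s => e s + t • v s) ≠ 0 := by
    rw [← key]; exact ht
  exact ((Module.Basis.is_basis_iff_det e).mpr (isUnit_iff_ne_zero.mpr hdet)).2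

lemma weight_eq_sum {n : ℕ} (w : Fin n → ℕ) (P : Fin n →₀ ℕ) :
    Finsupp.weight w P = ∑ j, w j * P j := by
  rw [Finsupp.weight_apply, Finsupp.sum_fintype]
  · exact Finset.sum_congr rfl fun j _ => by rw [smul_eq_mul, mul_comm]
  · intro i; rw [zero_smul]

lemma pderiv_hom {n : ℕ} {w : Fin n → ℕ} {f : MvPolynomial (Fin n) ℂ} {d : ℕ}
    (hf : IsWeightedHomogeneous w f d) (i : Fin n) {e : ℕ} (he : e + w i = d) :
    IsWeightedHomogeneous w (pderiv i f) e := by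
  rw [← mem_weightedHomogeneousSubmodule]
  rw [f.as_sum, map_sum]
  apply Submodule.sum_mem
  intro s hs
  rw [pderiv_monomial]
  by_cases h0 : s i = 0
  · simp [h0]
  · rw [mem_weightedHomogeneousSubmodule]
    apply isWeightedHomogeneous_monomial
    have hle : Finsupp.single i 1 ≤ s := by
      rw [Finsupp.single_le_iff]; omega
    have hadd : Finsupp.weight w (s - Finsupp.single i 1) +
        Finsupp.weight w (Finsupp.single i 1) = Finsupp.weight w s := by
      rw [← map_add, tsub_add_cancel_of_le hle]
    have hsd : Finsupp.weight w s = d := hf (MvPolynomial.mem_support_iff.mp hs)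
    have hsingle : Finsupp.weight w (Finsupp.single i 1) = w i := by
      rw [Finsupp.weight_apply, Finsupp.sum_single_index] <;> simp
    omega

lemma pderiv_zero_of_lt {n : ℕ} {w : Fin n → ℕ} {f : MvPolynomial (Fin n) ℂ} {d : ℕ}
    (hf : IsWeightedHomogeneous w f d) (i : Fin n) (hd : d < w i) :
    pderiv i f = 0 := by
  rw [f.as_sum, map_sum]
  apply Finset.sum_eq_zero
  intro s hs
  rw [pderiv_monomial]
  have h0 : s i = 0 := by
    by_contra h
    have hsd : Finsupp.weight w s = d := hf (MvPolynomial.mem_support_iff.mp hs)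
    rw [weight_eq_sum] at hsd
    have h1 : w i * s i ≤ ∑ j, w j * s j :=
      Finset.single_le_sum (f := fun j => w j * s j) (fun _ _ => Nat.zero_le _)
        (Finset.mem_univ i)
    have h2 : w i ≤ w i * s i := Nat.le_mul_of_pos_right _ (by omega)
    omega
  simp [h0]

lemma gen_mem_H {n : ℕ} {w : Fin n → ℕ} {h : MvPolynomial (Fin n) ℂ} {d : ℕ}
    (hh : IsWeightedHomogeneous w h d) {i : Fin n} {P : Fin n →₀ ℕ}
    (hP : (∑ j, w j * P j) = w i) :
    IsWeightedHomogeneous w (monomial P 1 * pderiv i h) d := by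
  by_cases hc : w i ≤ d
  · have h1 : IsWeightedHomogeneous w (monomial P 1 : MvPolynomial (Fin n) ℂ) (w i) :=
      isWeightedHomogeneous_monomial _ _ _ (by rw [weight_eq_sum]; exact hP)
    have h2 := pderiv_hom hh i (e := d - w i) (by omega)
    have h3 := h1.mul h2
    rwa [show w i + (d - w i) = d by omega] at h3
  · rw [pderiv_zero_of_lt hh i (by omega), mul_zero]
    intro k hk
    simp at hk

lemma whc_mul {n : ℕ} {w : Fin n → ℕ} (c q : MvPolynomial (Fin n) ℂ) {e m d : ℕ}
    (hq : IsWeightedHomogeneous w q e) (hme : m + e = d) :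
    weightedHomogeneousComponent w d (c * q) =
      weightedHomogeneousComponent w m c * q := by
  classical
  ext k
  rw [coeff_weightedHomogeneousComponent, coeff_mul, coeff_mul]
  split_ifs with hk
  · apply Finset.sum_congr rfl
    intro uv huv
    rw [Finset.HasAntidiagonal.mem_antidiagonal] at huv
    by_cases hq0 : coeff uv.2 q = 0
    · rw [hq0, mul_zero, mul_zero]
    · have h2 : Finsupp.weight w uv.2 = e := hq hq0
      have h1 : Finsupp.weight w uv.1 = m := by
        have hsum : Finsupp.weight w uv.1 + Finsupp.weight w uv.2 = Finsupp.weight w k := by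
          rw [← map_add, huv]
        omega
      rw [coeff_weightedHomogeneousComponent, if_pos h1]
  · symm
    apply Finset.sum_eq_zero
    intro uv huv
    rw [Finset.HasAntidiagonal.mem_antidiagonal] at huv
    by_cases hq0 : coeff uv.2 q = 0
    · rw [hq0, mul_zero]
    · rw [coeff_weightedHomogeneousComponent]
      split_ifs with h1
      · exfalso
        apply hk
        have h2 : Finsupp.weight w uv.2 = e := hq hq0
        have hsum : Finsupp.weight w uv.1 + Finsupp.weight w uv.2 = Finsupp.weight w k := by
          rw [← map_add, huv]
        omega
      · rw [zero_mul]

/-- The Jacobian ideal of a polynomial: the ideal generated by its partial derivatives. -/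
noncomputable def jacobianIdeal {n : ℕ} (f : MvPolynomial (Fin n) ℂ) :
    Ideal (MvPolynomial (Fin n) ℂ) :=
  Ideal.span (Set.range fun i => pderiv i f)

/-- The tangent space to the `J₀`-orbit of `h`: the ℂ-linear span of the polynomials
`x^P · ∂h/∂xᵢ` for `i = 1, …, n` and multi-indices `P` with `⟨P, w⟩ = wᵢ`. -/
noncomputable def orbitTangent {n : ℕ} (w : Fin n → ℕ) (h : MvPolynomial (Fin n) ℂ) :
    Submodule ℂ (MvPolynomial (Fin n) ℂ) :=
  Submodule.span ℂ
    {q | ∃ (i : Fin n) (P : Fin n →₀ ℕ), (∑ j, w j * P j) = w i ∧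
      q = monomial P 1 * pderiv i h}

lemma gen_mem_W {n : ℕ} {w : Fin n → ℕ} {f g : MvPolynomial (Fin n) ℂ} {d : ℕ}
    (hf : IsWeightedHomogeneous w f d) (hg : IsWeightedHomogeneous w g d)
    (hJ : jacobianIdeal f = jacobianIdeal g) {i : Fin n} {P : Fin n →₀ ℕ}
    (hP : (∑ j, w j * P j) = w i) :
    monomial P 1 * pderiv i f ∈
        (jacobianIdeal f).restrictScalars ℂ ⊓ weightedHomogeneousSubmodule ℂ w d ∧
    monomial P 1 * pderiv i g ∈
        (jacobianIdeal f).restrictScalars ℂ ⊓ weightedHomogeneousSubmodule ℂ w d := by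
  constructor
  · refine Submodule.mem_inf.mpr ⟨?_, gen_mem_H hf hP⟩
    rw [Submodule.restrictScalars_mem]
    exact Ideal.mul_mem_left _ _ (Ideal.subset_span ⟨i, rfl⟩)
  · refine Submodule.mem_inf.mpr ⟨?_, gen_mem_H hg hP⟩
    rw [Submodule.restrictScalars_mem, hJ]
    exact Ideal.mul_mem_left _ _ (Ideal.subset_span ⟨i, rfl⟩)

lemma orbitTangent_le_inf {n : ℕ} {w : Fin n → ℕ} {f g : MvPolynomial (Fin n) ℂ} {d : ℕ}
    (hf : IsWeightedHomogeneous w f d) (hg : IsWeightedHomogeneous w g d)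
    (hJ : jacobianIdeal f = jacobianIdeal g) (a b : ℂ) :
    orbitTangent w (C a * f + C b * g) ≤
      (jacobianIdeal f).restrictScalars ℂ ⊓ weightedHomogeneousSubmodule ℂ w d := by
  rw [orbitTangent, Submodule.span_le]
  rintro q ⟨i, P, hP, rfl⟩
  have hd : pderiv i (C a * f + C b * g) = C a * pderiv i f + C b * pderiv i g := by
    rw [map_add, pderiv_C_mul, pderiv_C_mul]
  have hq : monomial P 1 * pderiv i (C a * f + C b * g) =
      a • (monomial P 1 * pderiv i f) + b • (monomial P 1 * pderiv i g) := by
    rw [hd, smul_eq_C_mul, smul_eq_C_mul]; ring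
  rw [SetLike.mem_coe, hq]
  exact Submodule.add_mem _ (Submodule.smul_mem _ _ (gen_mem_W hf hg hJ hP).1)
    (Submodule.smul_mem _ _ (gen_mem_W hf hg hJ hP).2)

lemma inf_le_orbitTangent {n : ℕ} (w : Fin n → ℕ) {f : MvPolynomial (Fin n) ℂ} {d : ℕ}
    (hf : IsWeightedHomogeneous w f d) :
    (jacobianIdeal f).restrictScalars ℂ ⊓ weightedHomogeneousSubmodule ℂ w d ≤
      orbitTangent w f := by
  intro p hp
  obtain ⟨hpJ, hpH⟩ := Submodule.mem_inf.mp hp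
  rw [Submodule.restrictScalars_mem, jacobianIdeal,
    Ideal.mem_span_range_iff_exists_fun] at hpJ
  obtain ⟨c, hc⟩ := hpJ
  have hpH' : IsWeightedHomogeneous w p d := hpH
  have hrw : p = ∑ i, weightedHomogeneousComponent w (w i) (c i) * pderiv i f := by
    conv_lhs => rw [← hpH'.weightedHomogeneousComponent_same, ← hc, map_sum]
    apply Finset.sum_congr rfl
    intro i _
    by_cases hi : w i ≤ d
    · exact whc_mul (m := w i) (e := d - w i) _ _ (pderiv_hom hf i (by omega)) (by omega)
    · simp [pderiv_zero_of_lt hf i (by omega)]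
  rw [hrw]
  apply Submodule.sum_mem
  intro i _
  set r := weightedHomogeneousComponent w (w i) (c i) with hr
  have hrh : IsWeightedHomogeneous w r (w i) :=
    weightedHomogeneousComponent_isWeightedHomogeneous _ _
  rw [r.as_sum, Finset.sum_mul]
  apply Submodule.sum_mem
  intro k hk
  have hmo : (monomial k (coeff k r)) * pderiv i f =
      (coeff k r) • (monomial k 1 * pderiv i f) := by
    rw [smul_eq_C_mul, ← mul_assoc, C_mul_monomial, mul_one]
  rw [hmo]
  apply Submodule.smul_mem
  apply Submodule.subset_span
  exact ⟨i, k, by rw [← weight_eq_sum]; exact hrh (MvPolynomial.mem_support_iff.mp hk), rfl⟩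

lemma findim_H {n : ℕ} {w : Fin n → ℕ} (hw : ∀ i, 0 < w i) (d : ℕ) :
    FiniteDimensional ℂ (weightedHomogeneousSubmodule ℂ w d) := by
  classical
  have hD : {k : Fin n →₀ ℕ | Finsupp.weight w k = d}.Finite := by
    have hsub : {k : Fin n →₀ ℕ | Finsupp.weight w k = d} ⊆
        (fun k : Fin n →₀ ℕ => (k : Fin n → ℕ)) ⁻¹' (Set.pi Set.univ fun _ => Set.Iic d) := by
      intro k hk j _
      simp only [Set.mem_Iic]
      rw [Set.mem_setOf_eq, weight_eq_sum] at hk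
      have h1 : w j * k j ≤ ∑ j', w j' * k j' :=
        Finset.single_le_sum (f := fun j' => w j' * k j') (fun _ _ => Nat.zero_le _)
          (Finset.mem_univ j)
      have h2 : k j ≤ w j * k j := Nat.le_mul_of_pos_left _ (hw j)
      omega
    exact Set.Finite.subset (Set.Finite.preimage DFunLike.coe_injective.injOn
      (Set.Finite.pi fun _ => Set.finite_Iic d)) hsub
  set D := hD.toFinset with hDdef
  let Φ : weightedHomogeneousSubmodule ℂ w d →ₗ[ℂ] ({k : Fin n →₀ ℕ // k ∈ D} → ℂ) :=
    { toFun := fun p k => coeff k.1 p.1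
      map_add' := by intros; ext; simp
      map_smul' := by intros; ext; simp }
  apply FiniteDimensional.of_injective Φ
  rw [← LinearMap.ker_eq_bot, eq_bot_iff]
  intro p hp
  rw [LinearMap.mem_ker] at hp
  rw [Submodule.mem_bot]
  apply Subtype.ext
  apply MvPolynomial.ext
  intro k
  by_cases hk : Finsupp.weight w k = d
  · have hkD : k ∈ D := by rw [hDdef, Set.Finite.mem_toFinset]; exact hk
    have := congrFun hp ⟨k, hkD⟩
    simpa [Φ] using this
  · rw [show ((0 : weightedHomogeneousSubmodule ℂ w d) : MvPolynomial (Fin n) ℂ) = 0 from rfl,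
      coeff_zero]
    by_contra h
    exact hk (p.2 h)


/-- Let `f, g` be weighted homogeneous of degree `d` (positive weights) with `J_f = J_g`, and
`f_t = (1 - t)·f + t·g` with `V_t` the span of the `x^P · ∂f_t/∂xᵢ` (`⟨P, w⟩ = wᵢ`).  Then the
set of `t ∈ ℂ` for which `V_t ≠ J_f ∩ H_w^d` is finite; in particular `dim_ℂ V_t` is constant
for all `t` outside a finite set. -/
theorem orbitTangent_eq_off_finite_and_dim_const
    (n : ℕ) (w : Fin n → ℕ) (hw : ∀ i, 0 < w i) (d : ℕ)
    (f g : MvPolynomial (Fin n) ℂ)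
    (hf : IsWeightedHomogeneous w f d) (hg : IsWeightedHomogeneous w g d)
    (hJ : jacobianIdeal f = jacobianIdeal g) :
    {t : ℂ | orbitTangent w (C (1 - t) * f + C t * g) ≠
        (jacobianIdeal f).restrictScalars ℂ ⊓ weightedHomogeneousSubmodule ℂ w d}.Finite ∧
    ∃ (T : Set ℂ) (m : ℕ), T.Finite ∧ ∀ t ∉ T,
      Module.finrank ℂ (orbitTangent w (C (1 - t) * f + C t * g)) = m := by
  classical
  set W := (jacobianIdeal f).restrictScalars ℂ ⊓ weightedHomogeneousSubmodule ℂ w d with hWdef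
  haveI : FiniteDimensional ℂ (weightedHomogeneousSubmodule ℂ w d) := findim_H hw d
  haveI hfd : FiniteDimensional ℂ W :=
    Submodule.finiteDimensional_of_le (inf_le_right)
  have hVle : ∀ t : ℂ, orbitTangent w (C (1 - t) * f + C t * g) ≤ W := fun t =>
    orbitTangent_le_inf hf hg hJ _ _
  have hf0 : (C (1 - (0 : ℂ)) * f + C (0 : ℂ) * g) = f := by simp
  have hV0 : orbitTangent w f = W := by
    refine le_antisymm ?_ (inf_le_orbitTangent w hf)
    have := hVle 0
    rwa [hf0] at this
  -- Lift the generating set of `orbitTangent w f` into `W`.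
  set S₀ : Set (MvPolynomial (Fin n) ℂ) :=
    {q | ∃ (i : Fin n) (P : Fin n →₀ ℕ), (∑ j, w j * P j) = w i ∧
      q = monomial P 1 * pderiv i f} with hS₀def
  have hS₀W : S₀ ⊆ ↑W := by
    rintro q ⟨i, P, hP, rfl⟩
    exact (gen_mem_W hf hg hJ hP).1
  have hspan : Submodule.span ℂ S₀ = W := hV0
  set S' : Set W := Subtype.val ⁻¹' S₀ with hS'def
  have himg : Subtype.val '' S' = S₀ := by
    rw [hS'def, Set.image_preimage_eq_inter_range, Subtype.range_coe]
    exact Set.inter_eq_self_of_subset_left hS₀W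
  have hspan' : Submodule.span ℂ S' = (⊤ : Submodule ℂ W) := by
    apply Submodule.map_injective_of_injective
      (show Function.Injective W.subtype from Subtype.coe_injective)
    rw [Submodule.map_span, Submodule.map_top, Submodule.range_subtype]
    show Submodule.span ℂ (Subtype.val '' S') = W
    rw [himg, hspan]
  obtain ⟨b, hbS, hbspan, hbind⟩ := exists_linearIndependent ℂ S'
  have hbfin : b.Finite := hbind.set_finite_of_isNoetherian
  haveI : Fintype b := hbfin.fintype
  set e : Module.Basis b ℂ W := Module.Basis.mk hbind (by
    rw [Subtype.range_coe, hbspan, hspan']) with hedef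
  -- choose witnesses
  have hwit : ∀ x : b, ∃ (i : Fin n) (P : Fin n →₀ ℕ), (∑ j, w j * P j) = w i ∧
      (x : MvPolynomial (Fin n) ℂ) = monomial P 1 * pderiv i f := fun x => hbS x.2
  choose I Pf hcond heq using hwit
  have hvmem : ∀ x : b, monomial (Pf x) 1 * pderiv (I x) g
      - monomial (Pf x) 1 * pderiv (I x) f ∈ W := fun x =>
    Submodule.sub_mem _ (gen_mem_W hf hg hJ (hcond x)).2 (gen_mem_W hf hg hJ (hcond x)).1
  set v : b → W := fun x => ⟨_, hvmem x⟩ with hvdef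
  obtain ⟨T, hTfin, hT⟩ := generic_span e v
  have hmain : ∀ t ∉ T, orbitTangent w (C (1 - t) * f + C t * g) = W := by
    intro t ht
    refine le_antisymm (hVle t) ?_
    have htop := hT t ht
    have hWeq : W = Submodule.map W.subtype
        (Submodule.span ℂ (Set.range fun x => e x + t • v x)) := by
      rw [htop, Submodule.map_top, Submodule.range_subtype]
    rw [hWeq, Submodule.map_span]
    apply Submodule.span_le.mpr
    rintro q ⟨q', ⟨x, rfl⟩, rfl⟩
    have hvx : (v x : MvPolynomial (Fin n) ℂ) = monomial (Pf x) 1 * pderiv (I x) g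
        - monomial (Pf x) 1 * pderiv (I x) f := rfl
    have hEx : (e x : MvPolynomial (Fin n) ℂ) = monomial (Pf x) 1 * pderiv (I x) f := by
      rw [hedef, Module.Basis.coe_mk]
      exact heq x
    have hex : (W.subtype) (e x + t • v x) =
        monomial (Pf x) 1 * pderiv (I x) (C (1 - t) * f + C t * g) := by
      rw [Submodule.subtype_apply, Submodule.coe_add, SetLike.val_smul, hvx, hEx,
        map_add, pderiv_C_mul, pderiv_C_mul, smul_eq_C_mul, C_sub, C_1]
      ring
    rw [hex]
    exact Submodule.subset_span ⟨I x, Pf x, hcond x, rfl⟩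
  constructor
  · apply hTfin.subset
    intro t ht
    by_contra htT
    exact ht (hmain t htT)
  · exact ⟨T, Module.finrank ℂ W, hTfin, fun t ht => by rw [hmain t ht]⟩
end

section
/- Let f, g ∈ ℂ[x_1,…,x_n] be weighted homogeneous polynomials of degree d with respect to weights (w_1,…,w_n), and suppose φ : M(g) → M(f) is an isomorphism of graded ℂ-algebras (where the grading gives x_i degree w_i). Then φ is induced by a ℂ-algebra automorphism u* of ℂ[x_1,…,x_n] preserving the weighted grading and satisfying u*(J_g) = J_f. -/
open MvPolynomial

/-- The Milnor algebra `M(f) = ℂ[x₁,…,xₙ] / J_f`. -/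
abbrev MilnorAlgebra {n : ℕ} (f : MvPolynomial (Fin n) ℂ) : Type :=
  MvPolynomial (Fin n) ℂ ⧸ jacobianIdeal f

/-- The degree-`e` graded piece of the Milnor algebra of `f` for the weighted grading. -/
noncomputable def milnorPiece {n : ℕ} (w : Fin n → ℕ) (f : MvPolynomial (Fin n) ℂ) (e : ℕ) :
    Submodule ℂ (MilnorAlgebra f) :=
  Submodule.map (Ideal.Quotient.mkₐ ℂ (jacobianIdeal f)).toLinearMap
    (weightedHomogeneousSubmodule ℂ w e)

open Function

/-! ### Auxiliary material -/

/-- A surjective ring endomorphism of a Noetherian (comm) ring is injective. -/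
theorem aux_ring_endo_injective {A : Type*} [CommRing A] [IsNoetherianRing A] (σ : A →+* A)
    (hs : Surjective σ) : Injective σ := by
  let F : ℕ → A →+* A := fun k => Nat.rec (RingHom.id A) (fun _ Fk => σ.comp Fk) k
  have hFs : ∀ k, F (k + 1) = σ.comp (F k) := fun k => rfl
  have hFsurj : ∀ k, Surjective (F k) := by
    intro k
    induction k with
    | zero => exact surjective_id
    | succ k ih => exact hs.comp ih
  have hmono : Monotone fun k => RingHom.ker (F k) := by
    apply monotone_nat_of_le_succ
    intro k x hx
    have hx' : F k x = 0 := hx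
    show F (k + 1) x = 0
    rw [hFs, RingHom.comp_apply, hx', map_zero]
  obtain ⟨N, hN⟩ := monotone_stabilizes_iff_noetherian.mpr
    (inferInstance : IsNoetherian A A) ⟨fun k => RingHom.ker (F k), hmono⟩
  rw [injective_iff_map_eq_zero]
  intro x hx
  obtain ⟨y, rfl⟩ := hFsurj N x
  have h1 : y ∈ RingHom.ker (F (N + 1)) := by
    show F (N + 1) y = 0
    rw [hFs, RingHom.comp_apply, hx]
  have heq : RingHom.ker (F N) = RingHom.ker (F (N + 1)) := by
    simpa using hN (N + 1) (Nat.le_succ N)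
  have h2 : y ∈ RingHom.ker (F N) := heq ▸ h1
  exact h2

/-- Surjective correction lemma: if `span(a) ⊔ W = ⊤` and `dim V = card ι`, we can correct
the family `a` by elements of `W` to make it spanning. -/
theorem aux_exists_correction {ι : Type*} [Fintype ι] [DecidableEq ι] {V : Type*} [AddCommGroup V]
    [Module ℂ V] [FiniteDimensional ℂ V] (a : ι → V) (W : Submodule ℂ V)
    (H : Submodule.span ℂ (Set.range a) ⊔ W = ⊤)
    (Hdim : Module.finrank ℂ V = Fintype.card ι) :
    ∃ δ : ι → V, (∀ i, δ i ∈ W) ∧ Submodule.span ℂ (Set.range fun i => a i + δ i) = ⊤ := by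
  classical
  obtain ⟨C, hC⟩ := Submodule.exists_isCompl W
  let A : (ι → ℂ) →ₗ[ℂ] V := Fintype.linearCombination ℂ a
  have hA : ∀ i, A (Pi.single i 1) = a i := fun i => by
    simp [A, Fintype.linearCombination_apply, Pi.single_apply]
  have hrangeA : LinearMap.range A = Submodule.span ℂ (Set.range a) := by
    simp [A, Fintype.range_linearCombination]
  let pC := C.linearProjOfIsCompl W hC.symm
  let g : (ι → ℂ) →ₗ[ℂ] C := pC ∘ₗ A
  have hgsurj : Surjective g := by
    rw [← LinearMap.range_eq_top]
    refine top_le_iff.mp fun c _ => ?_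
    have : ((c : V) : V) ∈ LinearMap.range A ⊔ W := by
      rw [hrangeA, H]; trivial
    obtain ⟨x, hx, y, hy, hxy⟩ := Submodule.mem_sup.mp this
    obtain ⟨x', rfl⟩ := hx
    refine ⟨x', ?_⟩
    have : pC ((c : V)) = c := Submodule.linearProjOfIsCompl_apply_left hC.symm c
    have h2 : pC y = 0 := Submodule.projectionOnto_apply_of_mem_right hC.symm hy
    have : g x' = pC (A x' + y) := by simp [g, map_add, h2]
    rw [this, hxy]
    exact Submodule.linearProjOfIsCompl_apply_left hC.symm c
  have hcard : Module.finrank ℂ (ι → ℂ) = Fintype.card ι := Module.finrank_pi ℂ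
  have hrn : Module.finrank ℂ (LinearMap.range g) + Module.finrank ℂ (LinearMap.ker g)
      = Fintype.card ι := by rw [g.finrank_range_add_finrank_ker, hcard]
  have hrgtop : LinearMap.range g = ⊤ := LinearMap.range_eq_top.mpr hgsurj
  have hWC : Module.finrank ℂ W + Module.finrank ℂ C = Module.finrank ℂ V :=
    Submodule.finrank_add_eq_of_isCompl hC
  have hranktop : Module.finrank ℂ (LinearMap.range g) = Module.finrank ℂ C := by
    rw [hrgtop]; exact finrank_top ℂ _
  set U := LinearMap.ker g with hU
  have hdW : Module.finrank ℂ W ≤ Module.finrank ℂ U := by omega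
  let bU := Module.finBasis ℂ U
  let bW := Module.finBasis ℂ W
  let ε : U →ₗ[ℂ] W := bW.equivFun.symm.toLinearMap ∘ₗ
    (LinearMap.funLeft ℂ ℂ (Fin.castLE hdW)) ∘ₗ bU.equivFun.toLinearMap
  have hεsurj : Surjective ε := by
    have hco : ⇑ε = ⇑bW.equivFun.symm ∘ ⇑(LinearMap.funLeft ℂ ℂ (Fin.castLE hdW)) ∘ ⇑bU.equivFun := rfl
    show Surjective ⇑ε
    rw [hco]
    exact bW.equivFun.symm.surjective.comp
      ((LinearMap.funLeft_surjective_of_injective ℂ ℂ _ (Fin.castLE_injective hdW)).comp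
        bU.equivFun.surjective)
  obtain ⟨U', hU'⟩ := Submodule.exists_isCompl U
  let pU := U.linearProjOfIsCompl U' hU'
  let B : (ι → ℂ) →ₗ[ℂ] V := C.subtype ∘ₗ g + W.subtype ∘ₗ ε ∘ₗ pU
  have hBW : W ≤ LinearMap.range B := by
    rintro w₀ hw₀
    obtain ⟨u, hu⟩ := hεsurj ⟨w₀, hw₀⟩
    refine ⟨(u : ι → ℂ), ?_⟩
    have h1 : g (u : ι → ℂ) = 0 := u.2
    have h2 : pU (u : ι → ℂ) = u := Submodule.linearProjOfIsCompl_apply_left hU' u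
    simp [B, h1, h2, hu]
  have hBtop : LinearMap.range B = ⊤ := by
    rw [← top_le_iff, ← hC.codisjoint.eq_top]
    rintro v hv
    obtain ⟨x, hx, y, hy, rfl⟩ := Submodule.mem_sup.mp hv
    refine Submodule.add_mem _ (hBW hx) ?_
    obtain ⟨z, hz⟩ := hgsurj ⟨y, hy⟩
    have hBz : B z = y + (ε (pU z) : V) := by simp [B, hz]
    have : y = B z - (ε (pU z) : V) := by rw [hBz]; abel
    rw [this]
    exact Submodule.sub_mem _ ⟨z, rfl⟩ (hBW (ε (pU z)).2)
  refine ⟨fun i => B (Pi.single i 1) - a i, fun i => ?_, ?_⟩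
  · show B (Pi.single i 1) - a i ∈ W
    have hgA : (g (Pi.single i 1) : V) = (C.linearProjOfIsCompl W hC.symm (a i) : V) := by
      simp [g, hA i, pC]
    have hBe : B (Pi.single i 1) = (g (Pi.single i 1) : V) + (ε (pU (Pi.single i 1)) : V) := by
      simp [B]
    have hsum : (W.linearProjOfIsCompl C hC (a i) : V)
        + (C.linearProjOfIsCompl W hC.symm (a i) : V) = a i :=
      Submodule.projection_add_projection_eq_self hC (a i)
    have hkey : B (Pi.single i 1) - a i
        = (ε (pU (Pi.single i 1)) : V) - (W.linearProjOfIsCompl C hC (a i) : V) := by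
      rw [hBe, hgA]; nth_rewrite 2 [← hsum]; abel
    rw [hkey]
    exact Submodule.sub_mem _ (ε _).2 (W.linearProjOfIsCompl C hC (a i)).2
  · have heq : (fun i => a i + (B (Pi.single i 1) - a i)) = fun i => B (Pi.single i 1) := by
      funext i; abel
    rw [heq, ← hBtop]
    have : Set.range (fun i => B (Pi.single i 1)) = B '' (Set.range fun i => Pi.single i 1) := by
      rw [← Set.range_comp]; rfl
    rw [this, ← Submodule.map_span]
    have hb : Set.range (Pi.basisFun ℂ ι) = Set.range fun i : ι => Pi.single i 1 := by
      ext v; constructor <;> rintro ⟨i, rfl⟩ <;> exact ⟨i, by simp [Pi.basisFun_apply]⟩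
    have hspan : Submodule.span ℂ (Set.range fun i : ι => Pi.single i (1 : ℂ)) = ⊤ := by
      rw [← hb]; exact (Pi.basisFun ℂ ι).span_eq
    rw [hspan, Submodule.map_top]

/-! ### MvPolynomial helpers -/

/-- The linear-part extractor: coefficients of the linear monomials. -/
noncomputable def linPart (n : ℕ) : MvPolynomial (Fin n) ℂ →ₗ[ℂ] (Fin n → ℂ) :=
  LinearMap.pi fun j => lcoeff ℂ (Finsupp.single j 1)

lemma linPart_apply {n : ℕ} (p : MvPolynomial (Fin n) ℂ) (j : Fin n) :
    linPart n p j = coeff (Finsupp.single j 1) p := rfl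

lemma constantCoeff_eq_zero_of_isWH {n : ℕ} {w : Fin n → ℕ} {e : ℕ}
    {p : MvPolynomial (Fin n) ℂ}
    (he : e ≠ 0) (hp : IsWeightedHomogeneous w p e) : constantCoeff p = 0 := by
  have : coeff 0 p = 0 := by
    by_contra h
    exact he ((map_zero (Finsupp.weight (R := ℕ) w)) ▸ hp h).symm
  simpa [constantCoeff_eq] using this

lemma linPart_mul {n : ℕ} (p q : MvPolynomial (Fin n) ℂ) (hp : constantCoeff p = 0)
    (hq : constantCoeff q = 0) : linPart n (p * q) = 0 := by
  funext j
  show coeff (Finsupp.single j 1) (p * q) = 0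
  rw [coeff_mul]
  apply Finset.sum_eq_zero
  rintro ⟨a, b⟩ hab
  rw [Finset.HasAntidiagonal.mem_antidiagonal] at hab
  have hsum : ∀ k, a k + b k = Finsupp.single j 1 k := fun k => by
    rw [← hab]; rfl
  by_cases ha : a j = 0
  · have : a = 0 := by
      ext k
      simp only [Finsupp.coe_zero, Pi.zero_apply]
      by_cases hk : k = j
      · simpa [hk] using ha
      · have := hsum k
        rw [Finsupp.single_apply, if_neg (fun hh => hk hh.symm)] at this
        omega
    subst this
    simp only [constantCoeff_eq] at hp
    simp [hp]
  · have hb : b = 0 := by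
      ext k
      simp only [Finsupp.coe_zero, Pi.zero_apply]
      by_cases hk : k = j
      · subst hk
        have := hsum k
        rw [Finsupp.single_apply, if_pos rfl] at this
        omega
      · have := hsum k
        rw [Finsupp.single_apply, if_neg (fun hh => hk hh.symm)] at this
        omega
    subst hb
    simp only [constantCoeff_eq] at hq
    simp [hq]

lemma isWH_pow {n : ℕ} {w : Fin n → ℕ} {p : MvPolynomial (Fin n) ℂ} {e : ℕ}
    (hp : IsWeightedHomogeneous w p e) (m : ℕ) : IsWeightedHomogeneous w (p ^ m) (m * e) := by
  induction m with
  | zero => simpa using isWeightedHomogeneous_one (R := ℂ) w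
  | succ m ih =>
      have := ih.mul hp
      rw [pow_succ]
      convert this using 1
      ring

lemma isWH_aeval {n : ℕ} {w : Fin n → ℕ} (q : Fin n → MvPolynomial (Fin n) ℂ)
    (hq : ∀ i, IsWeightedHomogeneous w (q i) (w i))
    {p : MvPolynomial (Fin n) ℂ} {e : ℕ} (hp : IsWeightedHomogeneous w p e) :
    IsWeightedHomogeneous w (aeval q p) e := by
  nth_rewrite 1 [p.as_sum]
  rw [map_sum]
  apply IsWeightedHomogeneous.sum
  intro k hk
  have hk' : Finsupp.weight w k = e := hp (mem_support_iff.mp hk)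
  rw [aeval_monomial]
  have hprod : IsWeightedHomogeneous w (k.prod fun i m => q i ^ m) (Finsupp.weight w k) := by
    rw [Finsupp.prod, Finsupp.weight_apply, Finsupp.sum]
    apply IsWeightedHomogeneous.prod
    intro i _
    simpa [smul_eq_mul] using isWH_pow (hq i) (k i)
  have h2 := (isWeightedHomogeneous_C w (coeff k p)).mul hprod
  rw [zero_add, hk'] at h2
  simpa [algebraMap_eq] using h2

/-! ### Finsupp helpers -/

lemma aux_sub_single_add {n : ℕ} {k : Fin n →₀ ℕ} {i : Fin n} (hi : k i ≠ 0) :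
    (k - Finsupp.single i 1) + Finsupp.single i 1 = k := by
  ext a
  rw [Finsupp.add_apply, Finsupp.tsub_apply, Finsupp.single_apply]
  by_cases ha : i = a
  · rw [if_pos ha]; subst ha; omega
  · rw [if_neg ha]; omega

lemma aux_eq_zero_of_sum_eq_zero {n : ℕ} {k : Fin n →₀ ℕ}
    (h : (k.sum fun _ m => m) = 0) : k = 0 := by
  ext a
  simp only [Finsupp.coe_zero, Pi.zero_apply]
  by_contra ha
  have hmem : a ∈ k.support := Finsupp.mem_support_iff.mpr ha
  rw [Finsupp.sum] at h
  exact ha (Finset.sum_eq_zero_iff.mp h a hmem)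

lemma aux_sum_sub_single {n : ℕ} {k : Fin n →₀ ℕ} {i : Fin n} (hi : k i ≠ 0) :
    ((k - Finsupp.single i 1).sum fun _ m => m) + 1 = k.sum fun _ m => m := by
  conv_rhs => rw [← aux_sub_single_add hi]
  rw [Finsupp.sum_add_index' (fun _ => rfl) (fun _ _ _ => rfl),
    Finsupp.sum_single_index rfl]

lemma aux_eq_single_of_sum_eq_one {n : ℕ} {k : Fin n →₀ ℕ}
    (h : (k.sum fun _ m => m) = 1) : ∃ i, k = Finsupp.single i 1 := by
  have hk0 : k ≠ 0 := by rintro rfl; simp at h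
  obtain ⟨i, hi⟩ := Finsupp.support_nonempty_iff.mpr hk0
  have hi' : k i ≠ 0 := Finsupp.mem_support_iff.mp hi
  have hsum := aux_sum_sub_single hi'
  rw [h] at hsum
  have h0 := aux_eq_zero_of_sum_eq_zero (by omega :
    ((k - Finsupp.single i 1).sum fun _ m => m) = 0)
  exact ⟨i, by rw [← aux_sub_single_add hi', h0, zero_add]⟩

lemma aux_weight_single {n : ℕ} (w : Fin n → ℕ) (i : Fin n) :
    Finsupp.weight w (Finsupp.single i 1) = w i := by
  rw [Finsupp.weight_apply, Finsupp.sum_single_index] <;> simp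

lemma aux_coeff_single_X {n : ℕ} (a b : Fin n) :
    coeff (Finsupp.single a 1) (X b : MvPolynomial (Fin n) ℂ) = if a = b then 1 else 0 := by
  rw [coeff_X']
  by_cases h : a = b
  · subst h; simp
  · rw [if_neg (fun hh => h ((Finsupp.single_left_inj one_ne_zero).mp hh).symm), if_neg h]

/-! ### The monomial substitution `rmon` -/

/-- `rmon q k = ∏ i, (q i)^(k i)`. -/
noncomputable def rmon {n : ℕ} (q : Fin n → MvPolynomial (Fin n) ℂ) (k : Fin n →₀ ℕ) :
    MvPolynomial (Fin n) ℂ :=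
  k.prod fun i m => q i ^ m

lemma rmon_isWH {n : ℕ} {w : Fin n → ℕ} (q : Fin n → MvPolynomial (Fin n) ℂ)
    (hq : ∀ i, IsWeightedHomogeneous w (q i) (w i)) (k : Fin n →₀ ℕ) :
    IsWeightedHomogeneous w (rmon q k) (Finsupp.weight w k) := by
  rw [rmon, Finsupp.prod, Finsupp.weight_apply, Finsupp.sum]
  apply IsWeightedHomogeneous.prod
  intro i _
  simpa [smul_eq_mul] using isWH_pow (hq i) (k i)

lemma rmon_cc {n : ℕ} {w : Fin n → ℕ} (hw : ∀ i, 0 < w i)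
    (q : Fin n → MvPolynomial (Fin n) ℂ)
    (hq : ∀ i, IsWeightedHomogeneous w (q i) (w i)) {k : Fin n →₀ ℕ} (hk : k ≠ 0) :
    constantCoeff (rmon q k) = 0 := by
  haveI : Finsupp.NonTorsionWeight ℕ w := Finsupp.nonTorsionWeight_of ℕ w fun i => (hw i).ne'
  refine constantCoeff_eq_zero_of_isWH ?_ (rmon_isWH q hq k)
  rw [Ne, Finsupp.weight_eq_zero_iff_eq_zero]
  exact hk

lemma rmon_single {n : ℕ} (q : Fin n → MvPolynomial (Fin n) ℂ) (i : Fin n) :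
    rmon q (Finsupp.single i 1) = q i := by
  rw [rmon, Finsupp.prod_single_index (h := fun j m => q j ^ m) (pow_zero _), pow_one]

lemma rmon_succ {n : ℕ} (q : Fin n → MvPolynomial (Fin n) ℂ) {k : Fin n →₀ ℕ} {i : Fin n}
    (hi : k i ≠ 0) : rmon q k = q i * rmon q (k - Finsupp.single i 1) := by
  have h1 : rmon q k = rmon q (k - Finsupp.single i 1) * rmon q (Finsupp.single i 1) := by
    simp only [rmon]
    conv_lhs => rw [← aux_sub_single_add hi]
    exact Finsupp.prod_add_index (h := fun j m => q j ^ m) (fun _ _ => pow_zero _)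
      (fun _ _ _ _ => pow_add _ _ _)
  rw [h1, rmon_single]
  ring

lemma rmon_linPart {n : ℕ} {w : Fin n → ℕ} (hw : ∀ i, 0 < w i)
    (q : Fin n → MvPolynomial (Fin n) ℂ)
    (hq : ∀ i, IsWeightedHomogeneous w (q i) (w i)) {k : Fin n →₀ ℕ}
    (h2 : 2 ≤ k.sum fun _ m => m) : linPart n (rmon q k) = 0 := by
  have hk0 : k ≠ 0 := by rintro rfl; simp at h2
  obtain ⟨i, hi⟩ := Finsupp.support_nonempty_iff.mpr hk0
  have hi' : k i ≠ 0 := Finsupp.mem_support_iff.mp hi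
  rw [rmon_succ q hi']
  apply linPart_mul
  · exact constantCoeff_eq_zero_of_isWH (hw i).ne' (hq i)
  · apply rmon_cc hw q hq
    intro h0
    have := aux_sum_sub_single hi'
    rw [h0] at this
    simp only [Finsupp.sum_zero_index] at this
    omega

/-- If `f, g` are weighted homogeneous of degree `d` with respect to positive weights and
`φ : M(g) ≃ M(f)` is an isomorphism of graded ℂ-algebras, then `φ` is induced by a ℂ-algebra
automorphism `u*` of `ℂ[x₁,…,xₙ]` which preserves the weighted grading and satisfies
`u*(J_g) = J_f`: that is, `φ ∘ p = q ∘ u*` for the quotient projections `p, q`. -/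
theorem graded_iso_induced_by_graded_automorphism
    (n : ℕ) (w : Fin n → ℕ) (hw : ∀ i, 0 < w i) (d : ℕ)
    (f g : MvPolynomial (Fin n) ℂ)
    (hf : IsWeightedHomogeneous w f d) (hg : IsWeightedHomogeneous w g d)
    (φ : MilnorAlgebra g ≃ₐ[ℂ] MilnorAlgebra f)
    (hφ : ∀ e : ℕ, Submodule.map φ.toLinearMap (milnorPiece w g e) = milnorPiece w f e) :
    ∃ u : MvPolynomial (Fin n) ℂ ≃ₐ[ℂ] MvPolynomial (Fin n) ℂ,
      (∀ (e : ℕ) (p : MvPolynomial (Fin n) ℂ),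
          IsWeightedHomogeneous w p e → IsWeightedHomogeneous w (u p) e) ∧
      Ideal.map (u : MvPolynomial (Fin n) ℂ →+* MvPolynomial (Fin n) ℂ) (jacobianIdeal g) =
        jacobianIdeal f ∧
      ∀ p : MvPolynomial (Fin n) ℂ,
        φ (Ideal.Quotient.mk (jacobianIdeal g) p) = Ideal.Quotient.mk (jacobianIdeal f) (u p) := by
  classical
  haveI : Finsupp.NonTorsionWeight ℕ w := Finsupp.nonTorsionWeight_of ℕ w fun i => (hw i).ne'
  set Jf := jacobianIdeal f with hJfdef
  set Jg := jacobianIdeal g with hJgdef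
  let Φ : MvPolynomial (Fin n) ℂ →ₐ[ℂ] MilnorAlgebra f :=
    (φ : MilnorAlgebra g →ₐ[ℂ] MilnorAlgebra f).comp (Ideal.Quotient.mkₐ ℂ Jg)
  let Ψ : MvPolynomial (Fin n) ℂ →ₐ[ℂ] MilnorAlgebra f := Ideal.Quotient.mkₐ ℂ Jf
  -- Step 1: choose homogeneous representatives q i of φ([X i])
  have hchoice : ∀ i : Fin n, ∃ y, IsWeightedHomogeneous w y (w i) ∧
      Ideal.Quotient.mk Jf y = φ (Ideal.Quotient.mk Jg (X i)) := by
    intro i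
    have h1 : φ (Ideal.Quotient.mk Jg (X i)) ∈ milnorPiece w f (w i) := by
      rw [← hφ (w i)]
      refine ⟨Ideal.Quotient.mk Jg (X i), ?_, rfl⟩
      exact ⟨X i, isWeightedHomogeneous_X ℂ w i, by simp [Ideal.Quotient.mkₐ_eq_mk]; rfl⟩
    obtain ⟨y, hy, hyeq⟩ := h1
    exact ⟨y, hy, by simpa [Ideal.Quotient.mkₐ_eq_mk] using hyeq⟩
  choose q hqWH hqmk using hchoice
  have hqmk' : ∀ i, Ψ (q i) = Φ (X i) := hqmk
  -- Step 2: mk of rmon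
  have hrmk : ∀ k : Fin n →₀ ℕ,
      Ideal.Quotient.mk Jf (rmon q k) = φ (Ideal.Quotient.mk Jg (monomial k 1)) := by
    intro k
    rw [rmon, monomial_eq, C_1, one_mul, Finsupp.prod, Finsupp.prod]
    rw [map_prod, map_prod, map_prod]
    simp_rw [map_pow, hqmk]
  have hrmk' : ∀ k, Ψ (rmon q k) = Φ (monomial k 1) := hrmk
  -- Step 3: the compressed linear-part maps and graded ideal pieces
  let πm : (m : ℕ) → MvPolynomial (Fin n) ℂ →ₗ[ℂ] ({i : Fin n // w i = m} → ℂ) := fun m =>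
    (LinearMap.funLeft ℂ ℂ (Subtype.val)) ∘ₗ linPart n
  let Kcap : ℕ → Submodule ℂ (MvPolynomial (Fin n) ℂ) := fun m =>
    (Submodule.restrictScalars ℂ Jf) ⊓ weightedHomogeneousSubmodule ℂ w m
  have hπX : ∀ (m : ℕ) (j : {i : Fin n // w i = m}), πm m (X j.val) = Pi.single j 1 := by
    intro m j
    funext i
    have h0 : (πm m) (X j.val) i = coeff (Finsupp.single i.val 1) (X j.val : MvPolynomial (Fin n) ℂ) := rfl
    rw [h0, aux_coeff_single_X, Pi.single_apply]
    by_cases h : i = j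
    · rw [if_pos (congrArg Subtype.val h), if_pos h]
    · rw [if_neg (fun hh => h (Subtype.ext hh)), if_neg h]
  -- Step 4: spanning fact
  have hspan0 : ∀ m : ℕ, 0 < m →
      Submodule.span ℂ (Set.range fun i : {i : Fin n // w i = m} => πm m (q i.val)) ⊔
        Submodule.map (πm m) (Kcap m) = ⊤ := by
    intro m hm
    rw [← top_le_iff]
    have hsingles : Submodule.span ℂ
        (Set.range fun j : {i : Fin n // w i = m} => Pi.single j (1 : ℂ)) = ⊤ := by
      have hb : Set.range (Pi.basisFun ℂ {i : Fin n // w i = m})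
          = Set.range fun j : {i : Fin n // w i = m} => Pi.single j (1 : ℂ) := by
        ext v; constructor <;> rintro ⟨i, rfl⟩ <;> exact ⟨i, by simp [Pi.basisFun_apply]⟩
      rw [← hb]; exact (Pi.basisFun ℂ _).span_eq
    rw [← hsingles]
    rw [Submodule.span_le]
    rintro _ ⟨j, rfl⟩
    -- get z ∈ P m with φ (mk z) = mk (X j)
    have h1 : Ideal.Quotient.mk Jf (X j.val) ∈ milnorPiece w f m := by
      refine ⟨X j.val, ?_, by simp [Ideal.Quotient.mkₐ_eq_mk]; rfl⟩
      have := isWeightedHomogeneous_X ℂ w j.val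
      rwa [j.2] at this
    rw [← hφ m] at h1
    obtain ⟨-, ⟨z, hz, rfl⟩, hzeq⟩ := h1
    replace hz : IsWeightedHomogeneous w z m := hz
    replace hzeq : φ (Ideal.Quotient.mk Jg z) = Ideal.Quotient.mk Jf (X j.val) := hzeq
    -- the lift ζ of φ(mk z) built from rmon
    set ζ : MvPolynomial (Fin n) ℂ := ∑ k ∈ z.support, (coeff k z) • rmon q k with hζdef
    have hζmk : Ideal.Quotient.mk Jf ζ = Ideal.Quotient.mk Jf (X j.val) := by
      show Ψ ζ = Ψ (X j.val)
      have hzPhi : Φ z = Ψ (X j.val) := hzeq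
      rw [hζdef, map_sum]
      have hterm : ∀ k ∈ z.support, Ψ (coeff k z • rmon q k) = Φ (coeff k z • monomial k 1) := by
        intro k _
        rw [map_smul, map_smul, hrmk']
      have hzsum : (∑ k ∈ z.support, coeff k z • monomial k (1 : ℂ)) = z := by
        conv_rhs => rw [z.as_sum]
        refine Finset.sum_congr rfl fun k _ => ?_
        rw [smul_monomial, smul_eq_mul, mul_one]
      rw [Finset.sum_congr rfl hterm, ← map_sum, hzsum, hzPhi]
    have hζWH : ζ ∈ weightedHomogeneousSubmodule ℂ w m := by
      rw [hζdef]
      refine Submodule.sum_mem _ fun k hk => Submodule.smul_mem _ _ ?_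
      have := rmon_isWH q hqWH k
      rw [mem_weightedHomogeneousSubmodule]
      rwa [hz (mem_support_iff.mp hk)] at this
    have hξ : X j.val - ζ ∈ Kcap m := by
      constructor
      · show X j.val - ζ ∈ Jf
        rw [← Ideal.Quotient.eq_zero_iff_mem, map_sub, hζmk, sub_self]
      · show X j.val - ζ ∈ weightedHomogeneousSubmodule ℂ w m
        refine Submodule.sub_mem _ ?_ hζWH
        rw [mem_weightedHomogeneousSubmodule]
        have := isWeightedHomogeneous_X ℂ w j.val
        rwa [j.2] at this
    -- decompose πm ζ
    have hπζ : πm m ζ ∈ Submodule.span ℂ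
        (Set.range fun i : {i : Fin n // w i = m} => πm m (q i.val)) := by
      rw [hζdef, map_sum]
      refine Submodule.sum_mem _ fun k hk => ?_
      rw [map_smul]
      refine Submodule.smul_mem _ _ ?_
      have hkw : Finsupp.weight w k = m := hz (mem_support_iff.mp hk)
      have hk0 : k ≠ 0 := by
        rintro rfl
        rw [map_zero] at hkw
        omega
      rcases Nat.lt_or_ge (k.sum fun _ c => c) 2 with hs | hs
      · have hs1 : (k.sum fun _ c => c) ≠ 0 := fun h0 => hk0 (aux_eq_zero_of_sum_eq_zero h0)
        have hs1' : (k.sum fun _ c => c) = 1 := by omega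
        obtain ⟨i, rfl⟩ := aux_eq_single_of_sum_eq_one hs1'
        have hwi : w i = m := by rwa [aux_weight_single] at hkw
        rw [rmon_single]
        exact Submodule.subset_span ⟨⟨i, hwi⟩, rfl⟩
      · have : linPart n (rmon q k) = 0 := rmon_linPart hw q hqWH hs
        show (LinearMap.funLeft ℂ ℂ (Subtype.val) ∘ₗ linPart n) (rmon q k) ∈ _
        rw [LinearMap.comp_apply, this, map_zero]
        exact Submodule.zero_mem _
    -- conclude
    have hkey : Pi.single j (1 : ℂ) = πm m ζ + πm m (X j.val - ζ) := by
      rw [← map_add, add_sub_cancel, hπX]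
    show Pi.single j (1 : ℂ) ∈
      (Submodule.span ℂ (Set.range fun i : {i : Fin n // w i = m} => πm m (q i.val)) ⊔
        Submodule.map (πm m) (Kcap m) : Submodule ℂ _)
    rw [hkey]
    exact Submodule.add_mem _ (Submodule.mem_sup_left hπζ)
      (Submodule.mem_sup_right (Submodule.mem_map_of_mem hξ))
  -- Step 5: correct the q i so that linear parts span
  have hcorr : ∀ m : ℕ, 0 < m → ∃ κ : {i : Fin n // w i = m} → MvPolynomial (Fin n) ℂ,
      (∀ i, κ i ∈ Kcap m) ∧
      Submodule.span ℂ (Set.range fun i : {i : Fin n // w i = m} => πm m (q i.val + κ i)) = ⊤ := by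
    intro m hm
    obtain ⟨δ, hδW, hδspan⟩ := aux_exists_correction
      (fun i : {i : Fin n // w i = m} => πm m (q i.val))
      (Submodule.map (πm m) (Kcap m)) (hspan0 m hm) (Module.finrank_pi ℂ)
    choose κ hκmem hκeq using fun i => Submodule.mem_map.mp (hδW i)
    refine ⟨κ, hκmem, ?_⟩
    have hfeq : (fun i : {i : Fin n // w i = m} => πm m (q i.val + κ i))
        = fun i => πm m (q i.val) + δ i := by
      funext i
      rw [map_add, hκeq i]
    rw [hfeq, hδspan]
  choose κfun hκmem hκspan using hcorr
  let κ' : Fin n → MvPolynomial (Fin n) ℂ := fun i => κfun (w i) (hw i) ⟨i, rfl⟩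
  have hκ'eq : ∀ (m : ℕ) (hm : 0 < m) (i : Fin n) (hi : w i = m),
      κ' i = κfun m hm ⟨i, hi⟩ := by
    intro m hm i hi
    subst hi
    rfl
  let u' : Fin n → MvPolynomial (Fin n) ℂ := fun i => q i + κ' i
  have hκ'mem : ∀ i, κ' i ∈ Kcap (w i) := fun i => hκmem (w i) (hw i) ⟨i, rfl⟩
  have hu'WH : ∀ i, IsWeightedHomogeneous w (u' i) (w i) := by
    intro i
    exact (hqWH i).add ((hκ'mem i).2 : IsWeightedHomogeneous w (κ' i) (w i))
  have hu'mk : ∀ i, Ψ (u' i) = Φ (X i) := by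
    intro i
    have hJ : κ' i ∈ Jf := (hκ'mem i).1
    show Ideal.Quotient.mk Jf (q i + κ' i) = _
    rw [map_add, (Ideal.Quotient.eq_zero_iff_mem).mpr hJ, add_zero]
    exact hqmk i
  have hu'span : ∀ j : Fin n,
      Submodule.span ℂ (Set.range fun i : {i : Fin n // w i = w j} => πm (w j) (u' i.val)) = ⊤ := by
    intro j
    have hfeq : (fun i : {i : Fin n // w i = w j} => πm (w j) (u' i.val))
        = fun i : {i : Fin n // w i = w j} => πm (w j) (q i.val + κfun (w j) (hw j) i) := by
      funext i
      show πm (w j) (q i.val + κ' i.val) = _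
      rw [hκ'eq (w j) (hw j) i.val i.2]
    rw [hfeq, hκspan (w j) (hw j)]
  -- Step 6: the algebra endomorphism
  let U : MvPolynomial (Fin n) ℂ →ₐ[ℂ] MvPolynomial (Fin n) ℂ := aeval u'
  have hUX : ∀ i, U (X i) = u' i := fun i => aeval_X u' i
  have hUmk : ∀ p, Ideal.Quotient.mk Jf (U p) = φ (Ideal.Quotient.mk Jg p) := by
    have hhom : Ψ.comp U = Φ := by
      apply MvPolynomial.algHom_ext
      intro i
      rw [AlgHom.comp_apply, hUX, hu'mk]
    intro p
    exact DFunLike.congr_fun hhom p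
  have hUWH : ∀ (e : ℕ) (p : MvPolynomial (Fin n) ℂ),
      IsWeightedHomogeneous w p e → IsWeightedHomogeneous w (U p) e :=
    fun e p hp => isWH_aeval u' hu'WH hp
  -- Step 7: surjectivity, by strong induction on the weighted degree
  have hS : ∀ e : ℕ, ∀ p : MvPolynomial (Fin n) ℂ, IsWeightedHomogeneous w p e →
      p ∈ U.range := by
    intro e
    induction e using Nat.strong_induction_on with
    | _ e IH =>
      have hbig : ∀ (k : Fin n →₀ ℕ) (c : ℂ), Finsupp.weight w k = e →
          2 ≤ (k.sum fun _ c' => c') → (monomial k c : MvPolynomial (Fin n) ℂ) ∈ U.range := by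
        intro k c hk h2
        have hk0 : k ≠ 0 := by rintro rfl; simp at h2
        obtain ⟨i, hi⟩ := Finsupp.support_nonempty_iff.mpr hk0
        have hi' : k i ≠ 0 := Finsupp.mem_support_iff.mp hi
        have hk'0 : k - Finsupp.single i 1 ≠ 0 := by
          intro h0
          have hss := aux_sum_sub_single hi'
          rw [h0] at hss
          simp only [Finsupp.sum_zero_index] at hss
          omega
        have hwk' : 0 < Finsupp.weight w (k - Finsupp.single i 1) := by
          rcases Nat.eq_zero_or_pos (Finsupp.weight w (k - Finsupp.single i 1)) with h | h
          · exact absurd ((Finsupp.weight_eq_zero_iff_eq_zero w).mp h) hk'0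
          · exact h
        have hsplit : Finsupp.weight w k
            = w i + Finsupp.weight w (k - Finsupp.single i 1) := by
          conv_lhs => rw [← aux_sub_single_add hi']
          rw [map_add, aux_weight_single]
          ring
        have hfact : (monomial k c : MvPolynomial (Fin n) ℂ)
            = X i * monomial (k - Finsupp.single i 1) c := by
          rw [X, monomial_mul, one_mul, add_comm, aux_sub_single_add hi']
        rw [hfact]
        have hwi : 0 < w i := hw i
        refine mul_mem ?_ ?_
        · exact IH (w i) (by omega) (X i) (isWeightedHomogeneous_X ℂ w i)
        · exact IH (Finsupp.weight w (k - Finsupp.single i 1)) (by omega) _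
            (isWeightedHomogeneous_monomial _ _ _ rfl)
      intro p hp
      rw [p.as_sum]
      refine Subalgebra.sum_mem _ fun k hk => ?_
      have hkw : Finsupp.weight w k = e := hp (mem_support_iff.mp hk)
      rcases Nat.lt_or_ge (k.sum fun _ c => c) 2 with hs | hs
      · rcases Nat.lt_or_ge (k.sum fun _ c => c) 1 with hs0 | hs1
        · -- constant monomial
          have hkz : k = 0 := aux_eq_zero_of_sum_eq_zero (by omega)
          subst hkz
          rw [monomial_zero']
          exact Subalgebra.algebraMap_mem _ _
        · -- linear monomial
          have hs1' : (k.sum fun _ c => c) = 1 := by omega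
          obtain ⟨j, rfl⟩ := aux_eq_single_of_sum_eq_one hs1'
          rw [aux_weight_single] at hkw
          subst hkw
          have hXj : (X j : MvPolynomial (Fin n) ℂ) ∈ U.range := by
            have hmem : Pi.single (⟨j, rfl⟩ : {i : Fin n // w i = w j}) (1 : ℂ) ∈
                Submodule.span ℂ (Set.range
                  fun i : {i : Fin n // w i = w j} => πm (w j) (u' i.val)) := by
              rw [hu'span j]; trivial
            obtain ⟨c', hc'⟩ := (Submodule.mem_span_range_iff_exists_fun ℂ).mp hmem
            set s₀ : MvPolynomial (Fin n) ℂ :=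
              ∑ i : {i : Fin n // w i = w j}, c' i • u' i.val with hs₀def
            have hs₀range : s₀ ∈ U.range := by
              rw [hs₀def]
              refine Subalgebra.sum_mem _ fun i _ => ?_
              have hmem' : u' i.val ∈ U.range := ⟨X i.val, hUX i.val⟩
              exact Subalgebra.smul_mem _ hmem' _
            have hs₀WH : s₀ ∈ weightedHomogeneousSubmodule ℂ w (w j) := by
              refine Submodule.sum_mem _ fun i _ => Submodule.smul_mem _ _ ?_
              have h := hu'WH i.val
              rw [i.2] at h
              exact h
            set t : MvPolynomial (Fin n) ℂ := X j - s₀ with htdef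
            have htWH : IsWeightedHomogeneous w t (w j) := by
              have : t ∈ weightedHomogeneousSubmodule ℂ w (w j) :=
                Submodule.sub_mem _ (isWeightedHomogeneous_X ℂ w j) hs₀WH
              exact this
            have hπs₀ : πm (w j) s₀ = Pi.single (⟨j, rfl⟩ : {i : Fin n // w i = w j}) 1 := by
              rw [hs₀def, map_sum]
              simp_rw [map_smul]
              exact hc'
            have htπ : πm (w j) t = 0 := by
              rw [htdef, map_sub, hπs₀, hπX (w j) ⟨j, rfl⟩, sub_self]
            have htlin : ∀ i' : Fin n, coeff (Finsupp.single i' 1) t = 0 := by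
              intro i'
              by_cases hwi' : w i' = w j
              · show linPart n t i' = 0
                have h := congrFun htπ ⟨i', hwi'⟩
                exact h
              · refine htWH.coeff_eq_zero _ ?_
                rw [aux_weight_single]
                exact hwi'
            have htcc : constantCoeff t = 0 :=
              constantCoeff_eq_zero_of_isWH (hw j).ne' htWH
            have htrange : t ∈ U.range := by
              rw [t.as_sum]
              refine Subalgebra.sum_mem _ fun k' hk' => ?_
              have hk'w : Finsupp.weight w k' = w j := htWH (mem_support_iff.mp hk')
              have hk'c : coeff k' t ≠ 0 := mem_support_iff.mp hk'
              have h2 : 2 ≤ k'.sum fun _ c'' => c'' := by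
                rcases Nat.lt_or_ge (k'.sum fun _ c'' => c'') 2 with hlt | hge
                · exfalso
                  rcases Nat.lt_or_ge (k'.sum fun _ c'' => c'') 1 with h0 | h1
                  · have hz' : k' = 0 := aux_eq_zero_of_sum_eq_zero (by omega)
                    subst hz'
                    exact hk'c (by simpa [constantCoeff_eq] using htcc)
                  · have h1' : (k'.sum fun _ c'' => c'') = 1 := by omega
                    obtain ⟨i', rfl⟩ := aux_eq_single_of_sum_eq_one h1'
                    exact hk'c (htlin i')
                · exact hge
              exact hbig k' _ hk'w h2
            have hXt : (X j : MvPolynomial (Fin n) ℂ) = t + s₀ := by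
              rw [htdef]; ring
            rw [hXt]
            exact add_mem htrange hs₀range
          have hmono : (monomial (Finsupp.single j 1) (coeff (Finsupp.single j 1) p)
              : MvPolynomial (Fin n) ℂ) = coeff (Finsupp.single j 1) p • X j := by
            rw [X, smul_monomial, smul_eq_mul, mul_one]
          rw [hmono]
          exact Subalgebra.smul_mem _ hXj _
      · exact hbig k _ hkw hs
  have hUsurj : Surjective U := by
    rw [← AlgHom.range_eq_top, ← top_le_iff, ← adjoin_range_X, Algebra.adjoin_le_iff]
    rintro _ ⟨i, rfl⟩
    exact hS (w i) (X i) (isWeightedHomogeneous_X ℂ w i)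
  have hUinj : Injective U := aux_ring_endo_injective U.toRingHom hUsurj
  clear_value U
  -- Step 8: assemble
  let u : MvPolynomial (Fin n) ℂ ≃ₐ[ℂ] MvPolynomial (Fin n) ℂ :=
    AlgEquiv.ofBijective U ⟨hUinj, hUsurj⟩
  have hu_apply : ∀ p, u p = U p := fun p => rfl
  refine ⟨u, ?_, ?_, ?_⟩
  · intro e p hp
    rw [hu_apply]
    exact hUWH e p hp
  · apply le_antisymm
    · rw [Ideal.map_le_iff_le_comap]
      intro x hx
      show (u : MvPolynomial (Fin n) ℂ →+* MvPolynomial (Fin n) ℂ) x ∈ Jf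
      have hco : (u : MvPolynomial (Fin n) ℂ →+* MvPolynomial (Fin n) ℂ) x = U x := rfl
      rw [hco, ← Ideal.Quotient.eq_zero_iff_mem, hUmk,
        Ideal.Quotient.eq_zero_iff_mem.mpr hx, map_zero]
    · intro x hx
      have hy : u.symm x ∈ Jg := by
        rw [← Ideal.Quotient.eq_zero_iff_mem]
        apply φ.injective
        rw [map_zero, ← hUmk]
        have hux : U (u.symm x) = x := u.apply_symm_apply x
        rw [hux]
        exact Ideal.Quotient.eq_zero_iff_mem.mpr hx
      have hmem := Ideal.mem_map_of_mem
        (u : MvPolynomial (Fin n) ℂ →+* MvPolynomial (Fin n) ℂ) hy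
      rwa [show (u : MvPolynomial (Fin n) ℂ →+* MvPolynomial (Fin n) ℂ) (u.symm x) = x
        from u.apply_symm_apply x] at hmem
  · intro p
    exact (hUmk p).symm
end

section
/- Let h : (ℂ^n, 0) → (ℂ, 0) be a holomorphic germ with h ∉ J_h, where J_h ⊆ O_n is its Jacobian ideal. For t ∈ ℂ define the germ f_t(x, y, z) = h(x) + (1 + z + t)·h(y) on (ℂ^{2n+1}, 0). Then the germ h(y) does NOT belong to the ideal (f_t) + m_{2n+1}·J_{h(x)} + m_{2n+1}·J_{h(y)} + m_{2n+1}·(h(y)) in O_{2n+1}, where m_{2n+1} is the maximal ideal of O_{2n+1}. -/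
open scoped Topology

noncomputable def partialDeriv {n : ℕ} (i : Fin n) (h : (Fin n → ℂ) → ℂ) :
    (Fin n → ℂ) → ℂ :=
  fun x => fderiv ℂ h x (Pi.single i 1)

lemma analyticAt_partialDeriv {n : ℕ} {h : (Fin n → ℂ) → ℂ} {x : Fin n → ℂ}
    (hh : AnalyticAt ℂ h x) (i : Fin n) : AnalyticAt ℂ (partialDeriv i h) x := by
  have := ((ContinuousLinearMap.apply ℂ ℂ (Pi.single i (1:ℂ))).analyticAt
      (fderiv ℂ h x)).comp hh.fderiv
  exact this

lemma key {n : ℕ} {h : (Fin n → ℂ) → ℂ}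
    (G : (Fin n → ℂ) → ℂ) (d : Fin n → (Fin n → ℂ) → ℂ)
    (hG : AnalyticAt ℂ G 0) (hG0 : G 0 ≠ 0) (hd : ∀ i, AnalyticAt ℂ (d i) 0)
    (heq : ∀ᶠ y in 𝓝 (0 : Fin n → ℂ), h y * G y = ∑ i, d i y * partialDeriv i h y) :
    ∃ a : Fin n → ((Fin n → ℂ) → ℂ), (∀ i, AnalyticAt ℂ (a i) 0) ∧
      (∀ᶠ x in 𝓝 (0 : Fin n → ℂ), h x = ∑ i, a i x * partialDeriv i h x) := by
  refine ⟨fun i y => d i y / G y, fun i => (hd i).div hG hG0, ?_⟩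
  have hne : ∀ᶠ y in 𝓝 (0:Fin n → ℂ), G y ≠ 0 := hG.continuousAt.eventually_ne hG0
  filter_upwards [heq, hne] with y hy hny
  have hs : ∑ i, d i y / G y * partialDeriv i h y
      = (∑ i, d i y * partialDeriv i h y) / G y := by
    rw [Finset.sum_div]
    exact Finset.sum_congr rfl fun i _ => by rw [div_mul_eq_mul_div]
  rw [hs, ← hy, mul_div_assoc, div_self hny, mul_one]


lemma comp_aux {E F : Type*} [NormedAddCommGroup E] [NormedSpace ℂ E]
    [NormedAddCommGroup F] [NormedSpace ℂ F] (g : F → ℂ) (f : E → F) (x : E)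
    (hg : AnalyticAt ℂ g (f x)) (hf : AnalyticAt ℂ f x) :
    AnalyticAt ℂ (fun y => g (f y)) x := hg.comp hf

/-- **(Gaffney–Hauser example.)** Let `h : (ℂⁿ, 0) → (ℂ, 0)` be a holomorphic germ with
`h ∉ J_h` (i.e. `h` is not a germ-combination of its partial derivatives near `0`).  For
`t ∈ ℂ` let `f_t(x, y, z) = h(x) + (1 + z + t)·h(y)` on `(ℂⁿ × ℂⁿ × ℂ, 0)`.  Then the germ
`h(y)` does not belong to the ideal
`(f_t) + m_{2n+1}·J_{h(x)} + m_{2n+1}·J_{h(y)} + m_{2n+1}·(h(y))` of `O_{2n+1}`. -/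
theorem gaffney_hauser_not_mem
    (n : ℕ) (h : (Fin n → ℂ) → ℂ) (hh : AnalyticAt ℂ h 0) (h0 : h 0 = 0)
    (hnotJ : ¬ ∃ a : Fin n → ((Fin n → ℂ) → ℂ),
      (∀ i, AnalyticAt ℂ (a i) 0) ∧
      (∀ᶠ x in 𝓝 (0 : Fin n → ℂ), h x = ∑ i, a i x * partialDeriv i h x))
    (t : ℂ) :
    ¬ ∃ (a : ((Fin n → ℂ) × (Fin n → ℂ) × ℂ) → ℂ)
        (b c : Fin n → ((Fin n → ℂ) × (Fin n → ℂ) × ℂ) → ℂ)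
        (e : ((Fin n → ℂ) × (Fin n → ℂ) × ℂ) → ℂ),
      AnalyticAt ℂ a 0 ∧
      (∀ i, AnalyticAt ℂ (b i) 0 ∧ b i 0 = 0) ∧
      (∀ j, AnalyticAt ℂ (c j) 0 ∧ c j 0 = 0) ∧
      AnalyticAt ℂ e 0 ∧ e 0 = 0 ∧
      (∀ᶠ p : (Fin n → ℂ) × (Fin n → ℂ) × ℂ in 𝓝 0,
        h p.2.1 =
          a p * (h p.1 + (1 + p.2.2 + t) * h p.2.1) +
          (∑ i, b i p * partialDeriv i h p.1) +
          (∑ j, c j p * partialDeriv j h p.2.1) +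
          e p * h p.2.1) := by
  rintro ⟨a, b, c, e, ha, hb, hc, he, he0, heq⟩
  -- all partial derivatives of h vanish at 0, else h ∈ J_h trivially
  have hdz : ∀ i, partialDeriv i h 0 = 0 := by
    intro i
    by_contra hne
    refine hnotJ ⟨fun j x => if j = i then h x / partialDeriv i h x else 0, ?_, ?_⟩
    · intro j
      by_cases hj : j = i
      · subst hj
        simp only [eq_self_iff_true, if_true]
        exact hh.div (analyticAt_partialDeriv hh j) hne
      · simpa [hj] using (analyticAt_const : AnalyticAt ℂ (fun _ : Fin n → ℂ => (0:ℂ)) 0)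
    · have hne' : ∀ᶠ x in 𝓝 (0:Fin n → ℂ), partialDeriv i h x ≠ 0 :=
        (analyticAt_partialDeriv hh i).continuousAt.eventually_ne hne
      filter_upwards [hne'] with x hx
      rw [Finset.sum_eq_single i]
      · rw [if_pos rfl, div_mul_cancel₀ _ hx]
      · intro j _ hj; rw [if_neg hj, zero_mul]
      · intro hi; exact absurd (Finset.mem_univ i) hi
  -- package everything into one eventual statement near 0
  have big : ∀ᶠ p : (Fin n → ℂ) × (Fin n → ℂ) × ℂ in 𝓝 0,
      (AnalyticAt ℂ a p ∧ (∀ i, AnalyticAt ℂ (b i) p) ∧ (∀ i, AnalyticAt ℂ (c i) p) ∧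
        AnalyticAt ℂ e p) ∧
      (∀ᶠ q : (Fin n → ℂ) × (Fin n → ℂ) × ℂ in 𝓝 p,
        h q.2.1 =
          a q * (h q.1 + (1 + q.2.2 + t) * h q.2.1) +
          (∑ i, b i q * partialDeriv i h q.1) +
          (∑ j, c j q * partialDeriv j h q.2.1) +
          e q * h q.2.1) := by
    refine Filter.Eventually.and (Filter.Eventually.and ?_ (Filter.Eventually.and ?_
      (Filter.Eventually.and ?_ ?_))) heq.eventually_nhds
    · obtain ⟨V, hV, hVa⟩ := ha.exists_mem_nhds_analyticOnNhd
      exact Filter.eventually_of_mem hV fun p hp => hVa p hp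
    · rw [Filter.eventually_all]
      intro i
      obtain ⟨V, hV, hVa⟩ := (hb i).1.exists_mem_nhds_analyticOnNhd
      exact Filter.eventually_of_mem hV fun p hp => hVa p hp
    · rw [Filter.eventually_all]
      intro i
      obtain ⟨V, hV, hVa⟩ := (hc i).1.exists_mem_nhds_analyticOnNhd
      exact Filter.eventually_of_mem hV fun p hp => hVa p hp
    · obtain ⟨V, hV, hVa⟩ := he.exists_mem_nhds_analyticOnNhd
      exact Filter.eventually_of_mem hV fun p hp => hVa p hp
  -- the embedding z ↦ (0,0,z)
  have hellA : AnalyticAt ℂ (fun z : ℂ => ((0 : Fin n → ℂ), (0 : Fin n → ℂ), z)) 0 :=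
    analyticAt_const.prod (analyticAt_const.prod analyticAt_id)
  have hell : Filter.Tendsto (fun z : ℂ => ((0 : Fin n → ℂ), (0 : Fin n → ℂ), z))
      (𝓝 0) (𝓝 (0 : (Fin n → ℂ) × (Fin n → ℂ) × ℂ)) := by
    exact hellA.continuousAt.tendsto
  have haell : AnalyticAt ℂ (fun z : ℂ => a ((0 : Fin n → ℂ), (0 : Fin n → ℂ), z)) 0 :=
    comp_aux a (fun z : ℂ => ((0 : Fin n → ℂ), (0 : Fin n → ℂ), z)) 0 ha hellA
  have heell : AnalyticAt ℂ (fun z : ℂ => e ((0 : Fin n → ℂ), (0 : Fin n → ℂ), z)) 0 :=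
    comp_aux e (fun z : ℂ => ((0 : Fin n → ℂ), (0 : Fin n → ℂ), z)) 0 he hellA
  set gA : ℂ → ℂ := fun z => 1 - a (0, 0, z) * (2 + z + t) - e (0, 0, z) with hgA
  set gB : ℂ → ℂ := fun z => 1 - a (0, 0, z) * (1 + z + t) - e (0, 0, z) with hgB
  have hgAa : AnalyticAt ℂ gA 0 :=
    (analyticAt_const.sub (haell.mul ((analyticAt_const.add analyticAt_id).add
      analyticAt_const))).sub heell
  have hgBa : AnalyticAt ℂ gB 0 :=
    (analyticAt_const.sub (haell.mul ((analyticAt_const.add analyticAt_id).add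
      analyticAt_const))).sub heell
  -- not both gA, gB are identically zero
  have hnotboth : ¬ ((∀ᶠ z in 𝓝 (0:ℂ), gA z = 0) ∧ (∀ᶠ z in 𝓝 (0:ℂ), gB z = 0)) := by
    rintro ⟨hA, hB⟩
    have h1 : ∀ᶠ z in 𝓝 (0:ℂ), e ((0 : Fin n → ℂ), (0 : Fin n → ℂ), z) = 1 := by
      filter_upwards [hA, hB] with z hzA hzB
      simp only [hgA, hgB] at hzA hzB
      have ha0 : a ((0 : Fin n → ℂ), (0 : Fin n → ℂ), z) = 0 := by
        linear_combination hzB - hzA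
      linear_combination -hzB - (1 + z + t) * ha0
    have h2 := h1.self_of_nhds
    have h3 : ((0 : Fin n → ℂ), (0 : Fin n → ℂ), (0:ℂ))
        = (0 : (Fin n → ℂ) × (Fin n → ℂ) × ℂ) := rfl
    rw [h3, he0] at h2
    exact one_ne_zero h2.symm
  apply hnotJ
  by_cases hcase : ∀ᶠ z in 𝓝 (0:ℂ), gA z = 0
  · -- branch B : substitute x = 0, z = s
    have hBne : ∀ᶠ z in 𝓝[≠] (0:ℂ), gB z ≠ 0 :=
      hgBa.eventually_eq_zero_or_eventually_ne_zero.resolve_left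
        (fun hB => hnotboth ⟨hcase, hB⟩)
    have hbig' := (hell.eventually big).filter_mono (nhdsWithin_le_nhds (s := {(0:ℂ)}ᶜ))
    obtain ⟨s, ⟨⟨haS, hbS, hcS, heS⟩, heqS⟩, hgBs⟩ := (hbig'.and hBne).exists
    have hφA : AnalyticAt ℂ
        (fun y : Fin n → ℂ => ((0 : Fin n → ℂ), y, s)) 0 :=
      analyticAt_const.prod (analyticAt_id.prod analyticAt_const)
    have hφt : Filter.Tendsto (fun y : Fin n → ℂ => ((0 : Fin n → ℂ), y, s))
        (𝓝 0) (𝓝 ((0 : Fin n → ℂ), (0 : Fin n → ℂ), s)) := by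
      simpa using hφA.continuousAt.tendsto
    have heqy := hφt.eventually heqS
    refine key (fun y => 1 - a ((0 : Fin n → ℂ), y, s) * (1 + s + t) - e ((0 : Fin n → ℂ), y, s))
      (fun i y => c i ((0 : Fin n → ℂ), y, s)) ?_ ?_ ?_ ?_
    · have h1' : AnalyticAt ℂ (fun y : Fin n → ℂ => a ((0 : Fin n → ℂ), y, s)) 0 :=
        comp_aux a (fun y : Fin n → ℂ => ((0 : Fin n → ℂ), y, s)) 0 haS hφA
      have h2' : AnalyticAt ℂ (fun y : Fin n → ℂ => e ((0 : Fin n → ℂ), y, s)) 0 :=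
        comp_aux e (fun y : Fin n → ℂ => ((0 : Fin n → ℂ), y, s)) 0 heS hφA
      exact (analyticAt_const.sub (h1'.mul analyticAt_const)).sub h2'
    · simpa [hgB] using hgBs
    · intro i
      exact comp_aux (c i) (fun y : Fin n → ℂ => ((0 : Fin n → ℂ), y, s)) 0 (hcS i) hφA
    · filter_upwards [heqy] with y hy
      simp only [h0, hdz, mul_zero, zero_mul, add_zero, zero_add, mul_one,
        Finset.sum_const_zero] at hy
      linear_combination hy
  · -- branch A : substitute x = y, z = s
    have hAne : ∀ᶠ z in 𝓝[≠] (0:ℂ), gA z ≠ 0 :=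
      hgAa.eventually_eq_zero_or_eventually_ne_zero.resolve_left hcase
    have hbig' := (hell.eventually big).filter_mono (nhdsWithin_le_nhds (s := {(0:ℂ)}ᶜ))
    obtain ⟨s, ⟨⟨haS, hbS, hcS, heS⟩, heqS⟩, hgAs⟩ := (hbig'.and hAne).exists
    have hφA : AnalyticAt ℂ (fun y : Fin n → ℂ => (y, y, s)) 0 :=
      analyticAt_id.prod (analyticAt_id.prod analyticAt_const)
    have hφt : Filter.Tendsto (fun y : Fin n → ℂ => (y, y, s))
        (𝓝 0) (𝓝 ((0 : Fin n → ℂ), (0 : Fin n → ℂ), s)) := by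
      simpa using hφA.continuousAt.tendsto
    have heqy := hφt.eventually heqS
    refine key (fun y => 1 - a (y, y, s) * (2 + s + t) - e (y, y, s))
      (fun i y => b i (y, y, s) + c i (y, y, s)) ?_ ?_ ?_ ?_
    · have h1' : AnalyticAt ℂ (fun y : Fin n → ℂ => a (y, y, s)) 0 :=
        comp_aux a (fun y : Fin n → ℂ => (y, y, s)) 0 haS hφA
      have h2' : AnalyticAt ℂ (fun y : Fin n → ℂ => e (y, y, s)) 0 :=
        comp_aux e (fun y : Fin n → ℂ => (y, y, s)) 0 heS hφA
      exact (analyticAt_const.sub (h1'.mul analyticAt_const)).sub h2'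
    · simpa [hgA] using hgAs
    · intro i
      exact (comp_aux (b i) (fun y : Fin n → ℂ => (y, y, s)) 0 (hbS i) hφA).add
        (comp_aux (c i) (fun y : Fin n → ℂ => (y, y, s)) 0 (hcS i) hφA)
    · filter_upwards [heqy] with y hy
      have hsum : ∑ i, (b i (y, y, s) + c i (y, y, s)) * partialDeriv i h y
          = (∑ i, b i (y, y, s) * partialDeriv i h y)
            + ∑ i, c i (y, y, s) * partialDeriv i h y := by
        rw [← Finset.sum_add_distrib]
        exact Finset.sum_congr rfl fun i _ => add_mul _ _ _
      rw [hsum]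
      linear_combination hy
end
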